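/- Let 0 ≤ L ≤ b, 0 < r < R' < ∞, τ₁ ≥ 0 and σ₁ ≥ 0. Let α = γ_{b,r} ∧ γ_{L,R'} and let β = (δ_{τ₁} ⊗ I_{σ₁} ⊗ γ_{0,+∞}) ∧ δ_0 (the function equal to 0 at 0, to σ₁ for 0 < t ≤ τ₁, and to +∞ for t > τ₁), and write Y = ((b−L)/(R'−r))·r + b. Then hdev(α, β) = max( 0, τ₁·1{σ₁ ≥ Y} − [σ₁ − b]⁺/r, τ₁·1{Y ≥ σ₁} − [σ₁ − L]⁺/R' ), where [x]⁺ = max(x, 0) and 1{C} is 1 if condition C holds and 0 otherwise. -/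

import Mathlib

open scoped ENNReal
open Classical

noncomputable section

/-- Burst-delay function `δ_T`: `0` for `t ≤ T`, `+∞` for `t > T`. -/
def bdelay (T : ℝ) : ℝ → ℝ≥0∞ := fun t => if t ≤ T then 0 else ⊤

/-- Window function `I_w`: `w` at `t = 0`, `+∞` for `t > 0` (and `0` for `t < 0`). -/
def wndw (w : ℝ≥0∞) : ℝ → ℝ≥0∞ := fun t => if t < 0 then 0 else if t = 0 then w else ⊤

/-- Token-bucket curve `γ_{b,r}`: `b + r·t` for `t > 0`, `0` for `t ≤ 0`. -/
def tbkt (b r : ℝ≥0∞) : ℝ → ℝ≥0∞ := fun t => if t ≤ 0 then 0 else b + r * ENNReal.ofReal t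

/-- Min-plus convolution `(f ⊗ g)(t) = inf_{0 ≤ u ≤ t} (f(t − u) + g(u))` for `t ≥ 0`,
extended by `0` on negative times. -/
def mconv (f g : ℝ → ℝ≥0∞) : ℝ → ℝ≥0∞ :=
  fun t => if t < 0 then 0 else ⨅ u ∈ Set.Icc (0 : ℝ) t, (f (t - u) + g u)

/-- The basic MSLC building block `(δ_τ ⊗ I_σ ⊗ γ_{0,ρ}) ∧ δ_0`. -/
def mslcStep (τ : ℝ) (σ ρ : ℝ≥0∞) : ℝ → ℝ≥0∞ :=
  mconv (mconv (bdelay τ) (wndw σ)) (tbkt 0 ρ) ⊓ bdelay 0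

/-- Horizontal deviation (delay bound):
`hdev(α, β) = sup_{t ≥ 0} inf { d ≥ 0 : α(t − d) ≤ β(t) }`. -/
def hdev (α β : ℝ → ℝ≥0∞) : ℝ≥0∞ :=
  ⨆ t ∈ Set.Ici (0 : ℝ), ⨅ d ∈ {d : ℝ | 0 ≤ d ∧ α (t - d) ≤ β t}, ENNReal.ofReal d

/-- Vertical deviation (backlog bound): `vdev(α, β) = sup_{u ≥ 0} (α(u) − β(u))`
with truncated subtraction (so `x − (+∞) = 0`). -/
def vdev (α β : ℝ → ℝ≥0∞) : ℝ≥0∞ :=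
  ⨆ u ∈ Set.Ici (0 : ℝ), (α u - β u)

/-- Min-plus deconvolution `(f ⊘ g)(t) = sup_{u ≥ 0} (f(t + u) − g(u))`. -/
def mdeconv (f g : ℝ → ℝ≥0∞) : ℝ → ℝ≥0∞ :=
  fun t => ⨆ u ∈ Set.Ici (0 : ℝ), (f (t + u) - g u)

/-- FIFO leftover `(β ⊖_θ α)(t) = [β(t) − α(t − θ)]⁺` for `t > θ`, `0` for `t ≤ θ`. -/
def leftover (β α : ℝ → ℝ≥0∞) (θ : ℝ) : ℝ → ℝ≥0∞ :=
  fun t => if t ≤ θ then 0 else β t - α (t - θ)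

/-- Nondecreasing lower bound `f↑(t) = inf_{u ≥ t} f(u)`. -/
def ndlb (f : ℝ → ℝ≥0∞) : ℝ → ℝ≥0∞ := fun t => ⨅ u ∈ Set.Ici t, f u

/-! ### Auxiliary lemmas -/

lemma h1_eval (τ : ℝ) (σ : ℝ≥0∞) (t : ℝ) (ht : 0 ≤ t) :
    mconv (bdelay τ) (wndw σ) t = if t ≤ τ then σ else ⊤ := by
  unfold mconv
  rw [if_neg (not_lt.2 ht)]
  apply le_antisymm
  · refine iInf₂_le_of_le 0 ⟨le_refl 0, ht⟩ ?_
    have hw : wndw σ (0:ℝ) = σ := by simp [wndw]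
    rw [sub_zero, hw, bdelay]
    split_ifs with h <;> simp
  · refine le_iInf₂ fun u hu => ?_
    rcases eq_or_lt_of_le hu.1 with h0 | h0
    · subst h0
      have hw : wndw σ (0:ℝ) = σ := by simp [wndw]
      rw [hw, sub_zero, bdelay]
      split_ifs with h <;> simp
    · have : wndw σ u = ⊤ := by
        simp only [wndw, if_neg (not_lt.2 h0.le), if_neg (ne_of_gt h0)]
      rw [this]
      simp

lemma mconv_tbkt_top (f : ℝ → ℝ≥0∞) (t : ℝ) (ht : 0 ≤ t) :
    mconv f (tbkt 0 ⊤) t = f t := by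
  unfold mconv
  rw [if_neg (not_lt.2 ht)]
  apply le_antisymm
  · refine iInf₂_le_of_le 0 ⟨le_refl 0, ht⟩ ?_
    simp [tbkt]
  · refine le_iInf₂ fun u hu => ?_
    rcases eq_or_lt_of_le hu.1 with h0 | h0
    · subst h0
      have : tbkt 0 ⊤ (0:ℝ) = 0 := if_pos le_rfl
      rw [this, sub_zero, add_zero]
    · have : tbkt 0 ⊤ u = ⊤ := by
        simp only [tbkt, if_neg (not_le.2 h0), zero_add]
        rw [ENNReal.top_mul]
        exact (ENNReal.ofReal_pos.2 h0).ne'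
      rw [this]
      simp

lemma beta_nonpos (τ : ℝ) (σ : ℝ≥0∞) (t : ℝ) (ht : t ≤ 0) :
    mslcStep τ σ ⊤ t = 0 := by
  have hb : bdelay 0 t = 0 := if_pos ht
  simp only [mslcStep, Pi.inf_apply, hb, inf_eq_right]
  exact zero_le

lemma beta_mid (τ : ℝ) (σ : ℝ≥0∞) (t : ℝ) (ht : 0 < t) (htτ : t ≤ τ) :
    mslcStep τ σ ⊤ t = σ := by
  simp only [mslcStep, Pi.inf_apply, mconv_tbkt_top _ t ht.le, h1_eval τ σ t ht.le,
    if_pos htτ, bdelay, if_neg (not_le.2 ht)]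
  simp

lemma beta_hi (τ : ℝ) (hτ : 0 ≤ τ) (σ : ℝ≥0∞) (t : ℝ) (ht : τ < t) :
    mslcStep τ σ ⊤ t = ⊤ := by
  have ht0 : 0 < t := lt_of_le_of_lt hτ ht
  simp only [mslcStep, Pi.inf_apply, mconv_tbkt_top _ t ht0.le, h1_eval τ σ t ht0.le,
    if_neg (not_le.2 ht), bdelay, if_neg (not_le.2 ht0)]
  simp

lemma tbkt_pos (b r : ℝ) (hb : 0 ≤ b) (hr : 0 ≤ r) (s : ℝ) (hs : 0 < s) :
    tbkt (ENNReal.ofReal b) (ENNReal.ofReal r) s = ENNReal.ofReal (b + r * s) := by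
  simp only [tbkt, if_neg (not_le.2 hs)]
  rw [← ENNReal.ofReal_mul hr, ← ENNReal.ofReal_add hb (mul_nonneg hr hs.le)]

lemma cmp_le (L b r R' sig1 : ℝ) (hLb : L ≤ b) (hr : 0 < r) (hrR : r < R')
    (h : sig1 ≤ (b - L) / (R' - r) * r + b) :
    max (sig1 - b) 0 / r ≤ max (sig1 - L) 0 / R' := by
  have hR' : 0 < R' := hr.trans hrR
  have hRr : 0 < R' - r := sub_pos.2 hrR
  rcases le_total sig1 b with hsb | hsb
  · rw [show max (sig1 - b) 0 = 0 from max_eq_right (by linarith)]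
    simp only [zero_div]
    exact div_nonneg (le_max_right _ _) hR'.le
  · rw [max_eq_left (by linarith), max_eq_left (by linarith)]
    rw [div_le_div_iff₀ hr hR']
    have key : (sig1 - b) * (R' - r) ≤ (b - L) * r := by
      have h2 : sig1 - b ≤ (b - L) * r / (R' - r) := by
        rw [div_mul_eq_mul_div] at h; linarith
      exact (le_div_iff₀ hRr).mp h2
    nlinarith

lemma cmp_ge (L b r R' sig1 : ℝ) (hLb : L ≤ b) (hr : 0 < r) (hrR : r < R')
    (h : (b - L) / (R' - r) * r + b ≤ sig1) :
    max (sig1 - L) 0 / R' ≤ max (sig1 - b) 0 / r := by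
  have hR' : 0 < R' := hr.trans hrR
  have hRr : 0 < R' - r := sub_pos.2 hrR
  have hYb : b ≤ (b - L) / (R' - r) * r + b := by
    have : 0 ≤ (b - L) / (R' - r) * r :=
      mul_nonneg (div_nonneg (by linarith) hRr.le) hr.le
    linarith
  have hsb : b ≤ sig1 := hYb.trans h
  rw [max_eq_left (by linarith), max_eq_left (by linarith)]
  rw [div_le_div_iff₀ hR' hr]
  have key : (b - L) * r ≤ (sig1 - b) * (R' - r) := by
    have h2 : (b - L) * r / (R' - r) ≤ sig1 - b := by
      rw [div_mul_eq_mul_div] at h; linarith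
    exact (div_le_iff₀ hRr).mp h2
  nlinarith

lemma real_id (L b r R' tau1 sig1 : ℝ)
    (hLb : L ≤ b) (hr : 0 < r) (hrR : r < R') :
    max (tau1 - max (max (sig1 - b) 0 / r) (max (sig1 - L) 0 / R')) 0
      = max 0 (max
          (tau1 * (if (b - L) / (R' - r) * r + b ≤ sig1 then 1 else 0)
            - max (sig1 - b) 0 / r)
          (tau1 * (if sig1 ≤ (b - L) / (R' - r) * r + b then 1 else 0)
            - max (sig1 - L) 0 / R')) := by
  have hR' : 0 < R' := hr.trans hrR
  set A' := max (sig1 - b) 0 / r with hA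
  set B' := max (sig1 - L) 0 / R' with hB
  have hA0 : 0 ≤ A' := div_nonneg (le_max_right _ _) hr.le
  have hB0 : 0 ≤ B' := div_nonneg (le_max_right _ _) hR'.le
  rcases lt_trichotomy sig1 ((b - L) / (R' - r) * r + b) with h | h | h
  · have hAB : A' ≤ B' := cmp_le L b r R' sig1 hLb hr hrR h.le
    rw [if_neg (not_le.2 h), if_pos h.le, mul_zero, mul_one, zero_sub,
      max_eq_right hAB]
    simp only [max_def]
    split_ifs <;> linarith
  · have hAB : A' ≤ B' := cmp_le L b r R' sig1 hLb hr hrR h.le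
    have hBA : B' ≤ A' := cmp_ge L b r R' sig1 hLb hr hrR h.ge
    rw [if_pos h.ge, if_pos h.le, mul_one, max_eq_right hAB]
    have hE : A' = B' := le_antisymm hAB hBA
    rw [hE]
    simp only [max_def]
    split_ifs <;> linarith
  · have hBA : B' ≤ A' := cmp_ge L b r R' sig1 hLb hr hrR h.le
    rw [if_pos h.le, if_neg (not_le.2 h), mul_zero, mul_one, zero_sub,
      max_eq_left hBA]
    simp only [max_def]
    split_ifs <;> linarith

/-- delay bound for a shaped arrival curve `γ_{b,r} ∧ γ_{L,R'}` and a
single-step MSLC service curve with infinite rate `ρ₁ = +∞`. -/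
theorem stmt7 (L b r R' tau1 sig1 : ℝ)
    (hL : 0 ≤ L) (hLb : L ≤ b) (hr : 0 < r) (hrR : r < R')
    (htau : 0 ≤ tau1) (hsig : 0 ≤ sig1) :
    hdev (tbkt (ENNReal.ofReal b) (ENNReal.ofReal r)
            ⊓ tbkt (ENNReal.ofReal L) (ENNReal.ofReal R'))
         (mslcStep tau1 (ENNReal.ofReal sig1) ⊤)
      = ENNReal.ofReal
          (max 0 (max
            (tau1 * (if (b - L) / (R' - r) * r + b ≤ sig1 then 1 else 0)
              - max (sig1 - b) 0 / r)
            (tau1 * (if sig1 ≤ (b - L) / (R' - r) * r + b then 1 else 0)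
              - max (sig1 - L) 0 / R'))) := by
  have hR' : 0 < R' := hr.trans hrR
  have hb : 0 ≤ b := hL.trans hLb
  set α := tbkt (ENNReal.ofReal b) (ENNReal.ofReal r)
            ⊓ tbkt (ENNReal.ofReal L) (ENNReal.ofReal R') with hα
  set β := mslcStep tau1 (ENNReal.ofReal sig1) ⊤ with hβ
  set A' := max (sig1 - b) 0 / r with hA
  set B' := max (sig1 - L) 0 / R' with hB
  have hA0 : 0 ≤ A' := div_nonneg (le_max_right _ _) hr.le
  have hB0 : 0 ≤ B' := div_nonneg (le_max_right _ _) hR'.le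
  set S := max A' B' with hS
  have hS0 : 0 ≤ S := le_trans hA0 (le_max_left _ _)
  set D := max (tau1 - S) 0 with hD
  have hD0 : 0 ≤ D := le_max_right _ _
  -- α vanishes on nonpositive times
  have halpha_np : ∀ s : ℝ, s ≤ 0 → α s = 0 := by
    intro s hs
    simp [hα, Pi.inf_apply, tbkt, if_pos hs]
  -- α is at most σ on (0, S]
  have halpha_le : ∀ s : ℝ, s ≤ S → α s ≤ ENNReal.ofReal sig1 := by
    intro s hsS
    rcases le_or_gt s 0 with hs0 | hs0
    · rw [halpha_np s hs0]; exact zero_le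
    rcases le_max_iff.mp hsS with hsA | hsB
    · have hpos : 0 < max (sig1 - b) 0 := by
        by_contra hneg
        push_neg at hneg
        have : A' ≤ 0 := div_nonpos_of_nonpos_of_nonneg hneg hr.le
        linarith
      have hmax : max (sig1 - b) 0 = sig1 - b := max_eq_left (by
        rcases max_cases (sig1 - b) (0:ℝ) with ⟨h1, _⟩ | ⟨h1, _⟩
        · rw [h1] at hpos; exact hpos.le
        · rw [h1] at hpos; exact absurd hpos (lt_irrefl 0))
      have hrs : r * s ≤ sig1 - b := by
        rw [hA, hmax] at hsA
        rw [mul_comm]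
        exact (le_div_iff₀ hr).mp hsA
      refine le_trans inf_le_left ?_
      rw [tbkt_pos b r hb hr.le s hs0]
      exact ENNReal.ofReal_le_ofReal (by linarith)
    · have hpos : 0 < max (sig1 - L) 0 := by
        by_contra hneg
        push_neg at hneg
        have : B' ≤ 0 := div_nonpos_of_nonpos_of_nonneg hneg hR'.le
        linarith
      have hmax : max (sig1 - L) 0 = sig1 - L := max_eq_left (by
        rcases max_cases (sig1 - L) (0:ℝ) with ⟨h1, _⟩ | ⟨h1, _⟩
        · rw [h1] at hpos; exact hpos.le
        · rw [h1] at hpos; exact absurd hpos (lt_irrefl 0))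
      have hrs : R' * s ≤ sig1 - L := by
        rw [hB, hmax] at hsB
        rw [mul_comm]
        exact (le_div_iff₀ hR').mp hsB
      refine le_trans inf_le_right ?_
      rw [tbkt_pos L R' hL hR'.le s hs0]
      exact ENNReal.ofReal_le_ofReal (by linarith)
  -- α exceeds σ strictly beyond S
  have halpha_gt : ∀ s : ℝ, S < s → ENNReal.ofReal sig1 < α s := by
    intro s hsS
    have hs0 : 0 < s := lt_of_le_of_lt hS0 hsS
    have hsA : A' < s := lt_of_le_of_lt (le_max_left _ _) hsS
    have hsB : B' < s := lt_of_le_of_lt (le_max_right _ _) hsS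
    have h1 : sig1 < b + r * s := by
      have : max (sig1 - b) 0 < r * s := by
        have := (div_lt_iff₀ hr).mp hsA
        linarith [this]
      have h2 : sig1 - b < r * s := lt_of_le_of_lt (le_max_left _ _) this
      linarith
    have h2 : sig1 < L + R' * s := by
      have : max (sig1 - L) 0 < R' * s := by
        have := (div_lt_iff₀ hR').mp hsB
        linarith [this]
      have h3 : sig1 - L < R' * s := lt_of_le_of_lt (le_max_left _ _) this
      linarith
    have hα1 : α s = ENNReal.ofReal (b + r * s) ⊓ ENNReal.ofReal (L + R' * s) := by
      simp only [hα, Pi.inf_apply, tbkt_pos b r hb hr.le s hs0,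
        tbkt_pos L R' hL hR'.le s hs0]
    rw [hα1]
    exact lt_inf_iff.mpr ⟨(ENNReal.ofReal_lt_ofReal_iff (by linarith)).mpr h1,
      (ENNReal.ofReal_lt_ofReal_iff (by linarith)).mpr h2⟩
  have main : hdev α β = ENNReal.ofReal D := by
    apply le_antisymm
    · refine iSup₂_le fun t ht => ?_
      rcases le_or_gt t 0 with ht0 | ht0
      · refine le_trans (iInf₂_le 0 ⟨le_refl 0, ?_⟩) ?_
        · simp
        · rw [sub_zero, halpha_np t ht0]; exact zero_le
      rcases le_or_gt t tau1 with httau | httau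
      · -- 0 < t ≤ tau1 : use d = min t D
        have hβt : β t = ENNReal.ofReal sig1 := beta_mid tau1 _ t ht0 httau
        refine le_trans (iInf₂_le (min t D) ⟨le_min ht0.le hD0, ?_⟩)
          (ENNReal.ofReal_le_ofReal (min_le_right _ _))
        rw [hβt]
        rcases le_total D t with hDt | htD
        · rw [min_eq_right hDt]
          refine halpha_le _ ?_
          have : tau1 - S ≤ D := le_max_left _ _
          linarith
        · rw [min_eq_left htD, sub_self]
          rw [halpha_np 0 le_rfl]
          exact zero_le
      · -- t > tau1 : β t = ⊤
        have hβt : β t = ⊤ := beta_hi tau1 htau _ t httau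
        refine le_trans (iInf₂_le 0 ⟨le_refl 0, ?_⟩) ?_
        · simp
        · rw [hβt]; exact le_top
    · rcases le_or_gt (tau1 - S) 0 with hts | hts
      · have : D = 0 := max_eq_right hts
        rw [this]
        simp
      · have hDval : D = tau1 - S := max_eq_left hts.le
        have htau0 : 0 < tau1 := by linarith
        refine le_trans ?_ (le_iSup₂ (f := fun t _ =>
          ⨅ d ∈ {d : ℝ | 0 ≤ d ∧ α (t - d) ≤ β t}, ENNReal.ofReal d) tau1 htau)
        refine le_iInf₂ fun d hd => ?_
        obtain ⟨hd0, hdle⟩ := hd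
        rw [show β tau1 = ENNReal.ofReal sig1 from beta_mid tau1 _ tau1 htau0 le_rfl] at hdle
        refine ENNReal.ofReal_le_ofReal ?_
        by_contra hdD
        push_neg at hdD
        have hgt : S < tau1 - d := by rw [hDval] at hdD; linarith
        exact absurd hdle (not_le.2 (halpha_gt _ hgt))
  rw [main, hD, hS, hA, hB, real_id L b r R' tau1 sig1 hLb hr hrR]
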